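/- arXiv:1802.06294 — 2 statements merged into one kernel-verified Lean document; each statement's English description precedes it below -/
import Mathlib

section
/- Trapping argument: Let β, κ > 0 and let L, r : [t₀,∞) → ℝ be C¹ with L increasing, L(t) → ∞, and r'(t) = κ e^{-L(t)/2} r(t) + g(t) where |g(t)| ≤ K e^{-(1+β)L(t)} for some K > 0. If moreover r(t) → 0 as t → ∞, then there exists C > 0 and t₁ ≥ t₀ such that |r(t)| ≤ C e^{-(1/2+β)L(t)} for all t ≥ t₁. -/
open Filter

lemma trapping_aux (β κ K t₀ : ℝ) (hβ : 0 < β) (hκ : 0 < κ) (hK : 0 < K)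
    (L r g : ℝ → ℝ)
    (hLdiff : ∀ t, t₀ ≤ t → DifferentiableAt ℝ L t)
    (hrdiff : ∀ t, t₀ ≤ t → DifferentiableAt ℝ r t)
    (hLmono : StrictMonoOn L (Set.Ici t₀))
    (hr' : ∀ t, t₀ ≤ t → deriv r t = κ * Real.exp (-(L t) / 2) * r t + g t)
    (hg : ∀ t, t₀ ≤ t → |g t| ≤ K * Real.exp (-((1 + β) * L t)))
    (hrlim : Tendsto r atTop (nhds 0))
    (s : ℝ) (hs : t₀ ≤ s)
    (hrs : (K + 1) / κ * Real.exp (-((1 / 2 + β) * L s)) < r s) : False := by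
  set C : ℝ := (K + 1) / κ with hC
  have hCpos : 0 < C := by positivity
  set M : ℝ → ℝ := fun t => C * Real.exp (-((1 / 2 + β) * L t)) with hM
  have hMpos : ∀ t, 0 < M t := fun t => by positivity
  -- derivative of L is nonnegative on [t₀, ∞)
  have hL' : ∀ t, t₀ ≤ t → 0 ≤ deriv L t := by
    intro t ht
    have hd : HasDerivWithinAt L (deriv L t) (Set.Ioi t) t :=
      ((hLdiff t ht).hasDerivAt).hasDerivWithinAt
    have hslope : Tendsto (slope L t) (nhdsWithin t (Set.Ioi t)) (nhds (deriv L t)) := by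
      have := hasDerivWithinAt_iff_tendsto_slope.mp hd
      rwa [show Set.Ioi t \ {t} = Set.Ioi t from Set.diff_singleton_eq_self (by simp)] at this
    refine ge_of_tendsto hslope ?_
    filter_upwards [self_mem_nhdsWithin] with u hu
    have hu' : t < u := hu
    have : L t ≤ L u := (hLmono ht (le_trans ht hu'.le) hu').le
    have hpos : 0 < u - t := by linarith
    rw [slope_def_field]
    exact div_nonneg (by linarith) hpos.le
  -- derivative of M
  have hMderiv : ∀ x, t₀ ≤ x → HasDerivAt M
      (C * (Real.exp (-((1 / 2 + β) * L x)) * -((1 / 2 + β) * deriv L x))) x := by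
    intro x hx
    have h1 : HasDerivAt (fun t => -((1 / 2 + β) * L t)) (-((1 / 2 + β) * deriv L x)) x :=
      (((hLdiff x hx).hasDerivAt).const_mul (1 / 2 + β)).neg
    exact h1.exp.const_mul C
  -- key exponent identity
  have hexp : ∀ x, Real.exp (-(L x) / 2) * Real.exp (-((1 / 2 + β) * L x))
      = Real.exp (-((1 + β) * L x)) := by
    intro x
    rw [← Real.exp_add]
    congr 1
    ring
  -- barrier: M t ≤ r t for all t ≥ s
  have key : ∀ t, s ≤ t → M t ≤ r t := by
    intro b hb
    have hIcc : ∀ x ∈ Set.Icc s b, t₀ ≤ x := fun x hx => le_trans hs hx.1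
    have hIco : ∀ x ∈ Set.Ico s b, t₀ ≤ x := fun x hx => le_trans hs hx.1
    refine image_le_of_deriv_right_lt_deriv_boundary'
      (f := M) (f' := fun x => C * (Real.exp (-((1 / 2 + β) * L x)) * -((1 / 2 + β) * deriv L x)))
      (B := r) (B' := deriv r) (a := s) (b := b)
      (fun x hx => (hMderiv x (hIcc x hx)).continuousAt.continuousWithinAt)
      (fun x hx => (hMderiv x (hIco x hx)).hasDerivWithinAt)
      hrs.le
      (fun x hx => ((hrdiff x (hIcc x hx)).continuousAt).continuousWithinAt)
      (fun x hx => ((hrdiff x (hIco x hx)).hasDerivAt).hasDerivWithinAt)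
      ?_ ⟨hb, le_refl b⟩
    intro x hx heq
    have hx0 : t₀ ≤ x := hIco x hx
    have hE : (0:ℝ) < Real.exp (-((1 + β) * L x)) := Real.exp_pos _
    have hgx : -(K * Real.exp (-((1 + β) * L x))) ≤ g x := (abs_le.mp (hg x hx0)).1.trans_eq' rfl
    have hrd : deriv r x = κ * Real.exp (-(L x) / 2) * r x + g x := hr' x hx0
    have hκC : κ * C = K + 1 := by
      rw [hC]; field_simp
    have hrM : κ * Real.exp (-(L x) / 2) * M x = (K + 1) * Real.exp (-((1 + β) * L x)) := by
      simp only [hM]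
      calc κ * Real.exp (-(L x) / 2) * (C * Real.exp (-((1 / 2 + β) * L x)))
          = (κ * C) * (Real.exp (-(L x) / 2) * Real.exp (-((1 / 2 + β) * L x))) := by ring
        _ = (K + 1) * Real.exp (-((1 + β) * L x)) := by rw [hκC, hexp x]
    have hlow : Real.exp (-((1 + β) * L x)) ≤ deriv r x := by
      rw [hrd, ← heq, hrM]
      linarith
    have hMle : C * (Real.exp (-((1 / 2 + β) * L x)) * -((1 / 2 + β) * deriv L x)) ≤ 0 := by
      have h1 : 0 ≤ deriv L x := hL' x hx0
      have h2 : (0:ℝ) < Real.exp (-((1 / 2 + β) * L x)) := Real.exp_pos _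
      have h3 : 0 ≤ (1 / 2 + β) * deriv L x := by positivity
      have h4 : C * (Real.exp (-((1 / 2 + β) * L x)) * -((1 / 2 + β) * deriv L x))
          = -(C * Real.exp (-((1 / 2 + β) * L x)) * ((1 / 2 + β) * deriv L x)) := by ring
      rw [h4]
      exact neg_nonpos.mpr (mul_nonneg (mul_nonneg hCpos.le h2.le) h3)
    linarith
  -- r is nondecreasing on [s, ∞)
  have hmono : StrictMonoOn r (Set.Ici s) := by
    refine strictMonoOn_of_deriv_pos (convex_Ici s)
      (fun x hx => ((hrdiff x (le_trans hs hx)).continuousAt).continuousWithinAt) ?_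
    intro x hx
    rw [interior_Ici] at hx
    have hx0 : t₀ ≤ x := le_trans hs hx.le
    have hMx : M x ≤ r x := key x hx.le
    have hκC : κ * C = K + 1 := by
      rw [hC]; field_simp
    have hrM : κ * Real.exp (-(L x) / 2) * M x = (K + 1) * Real.exp (-((1 + β) * L x)) := by
      simp only [hM]
      calc κ * Real.exp (-(L x) / 2) * (C * Real.exp (-((1 / 2 + β) * L x)))
          = (κ * C) * (Real.exp (-(L x) / 2) * Real.exp (-((1 / 2 + β) * L x))) := by ring
        _ = (K + 1) * Real.exp (-((1 + β) * L x)) := by rw [hκC, hexp x]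
    have hgx : -(K * Real.exp (-((1 + β) * L x))) ≤ g x := (abs_le.mp (hg x hx0)).1.trans_eq' rfl
    have hE : (0:ℝ) < Real.exp (-((1 + β) * L x)) := Real.exp_pos _
    have h2 : (0:ℝ) < Real.exp (-(L x) / 2) := Real.exp_pos _
    rw [hr' x hx0]
    have hstep : κ * Real.exp (-(L x) / 2) * M x ≤ κ * Real.exp (-(L x) / 2) * r x :=
      mul_le_mul_of_nonneg_left hMx (by positivity)
    linarith
  have hev : ∀ᶠ t in atTop, r s ≤ r t := by
    filter_upwards [eventually_ge_atTop s] with t ht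
    rcases eq_or_lt_of_le ht with h | h
    · rw [h]
    · exact (hmono (Set.self_mem_Ici) ht h).le
  have h0 : r s ≤ 0 := ge_of_tendsto hrlim hev
  have h1 : (0:ℝ) < C * Real.exp (-((1 / 2 + β) * L s)) := by positivity
  linarith

/-- Trapping argument: if `L` is strictly increasing with `L(t) → ∞`,
`r' = κ e^{-L/2} r + g` with `|g| ≤ K e^{-(1+β)L}` and `r(t) → 0`, then
`|r t| ≤ C e^{-(1/2+β) L t}` for large `t`. -/
theorem trapping_bound (β κ K t₀ : ℝ) (hβ : 0 < β) (hκ : 0 < κ) (hK : 0 < K)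
    (L r g : ℝ → ℝ)
    (hLdiff : ∀ t, t₀ ≤ t → DifferentiableAt ℝ L t)
    (hrdiff : ∀ t, t₀ ≤ t → DifferentiableAt ℝ r t)
    (hLmono : StrictMonoOn L (Set.Ici t₀))
    (hLlim : Tendsto L atTop atTop)
    (hr' : ∀ t, t₀ ≤ t → deriv r t = κ * Real.exp (-(L t) / 2) * r t + g t)
    (hg : ∀ t, t₀ ≤ t → |g t| ≤ K * Real.exp (-((1 + β) * L t)))
    (hrlim : Tendsto r atTop (nhds 0)) :
    ∃ C : ℝ, 0 < C ∧ ∃ t₁ : ℝ, t₀ ≤ t₁ ∧ ∀ t, t₁ ≤ t →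
      |r t| ≤ C * Real.exp (-((1 / 2 + β) * L t)) := by
  refine ⟨(K + 1) / κ, by positivity, t₀, le_refl _, ?_⟩
  intro t ht
  by_contra hcon
  push_neg at hcon
  rcases lt_abs.mp hcon with h | h
  · exact trapping_aux β κ K t₀ hβ hκ hK L r g hLdiff hrdiff hLmono hr' hg hrlim t ht h
  · refine trapping_aux β κ K t₀ hβ hκ hK L (fun x => -r x) (fun x => -g x)
      hLdiff (fun x hx => (hrdiff x hx).neg) hLmono ?_ ?_ ?_ t ht h
    · intro x hx
      have : deriv (fun x => -r x) x = -deriv r x := deriv.neg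
      rw [this, hr' x hx]
      ring
    · intro x hx
      simpa using hg x hx
    · simpa using hrlim.neg
end

section
/- No two-soliton separation with repulsive interaction at rate slower than allowed: Let β ∈ (0, 1/2), c₀ > 0, and let L, v : [t₀,∞) → ℝ be C¹ with L(t) → ∞, v(t) → 0, |L'(t) - v(t)| ≤ e^{-(1/2+β)L(t)} and v(t) ≤ -c₀ ∫ₜ^∞ e^{-L(s)} ds for all large t (with the integral finite). Then letting l := limsup_{t→∞} L(t)/log t, one has both l ≤ 1/(1/2+β) and, for every ε ∈ (0,l), l + ε - 1 ≥ (1/2+β)(l - ε); these are contradictory for small ε, so no such pair (L, v) exists. -/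
open Filter MeasureTheory

private lemma slope_le {f : ℝ → ℝ} {a t k : ℝ} (hat : a ≤ t)
    (hd : ∀ u ∈ Set.Icc a t, DifferentiableAt ℝ f u)
    (hk : ∀ u ∈ Set.Icc a t, deriv f u ≤ k) :
    f t ≤ f a + k * (t - a) := by
  have hanti : AntitoneOn (fun u => f u - k * u) (Set.Icc a t) := by
    apply antitoneOn_of_deriv_nonpos (convex_Icc a t)
    · exact fun u hu => ((hd u hu).sub ((differentiableAt_id.const_mul k))).continuousAt.continuousWithinAt
    · intro u hu
      rw [interior_Icc] at hu
      exact ((hd u (Set.Ioo_subset_Icc_self hu)).sub ((differentiableAt_id.const_mul k))).differentiableWithinAt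
    · intro u hu
      rw [interior_Icc] at hu
      have hu' : u ∈ Set.Icc a t := Set.Ioo_subset_Icc_self hu
      have h1 : HasDerivAt (fun u : ℝ => k * u) k u := by
        simpa using (hasDerivAt_id u).const_mul k
      rw [deriv_fun_sub (hd u hu') h1.differentiableAt, h1.deriv]
      linarith [hk u hu']
  have := hanti (Set.left_mem_Icc.2 hat) (Set.right_mem_Icc.2 hat) hat
  simp only at this
  linarith

private lemma stay_below {h : ℝ → ℝ} {a : ℝ}
    (hd : ∀ u, a ≤ u → DifferentiableAt ℝ h u)
    (hneg : ∀ u, a ≤ u → 0 ≤ h u → deriv h u < 0)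
    (ha : h a ≤ 0) : ∀ t, a ≤ t → h t ≤ 0 := by
  intro t hat
  by_contra hpos
  push_neg at hpos
  have hcont : ContinuousOn h (Set.Icc a t) :=
    fun u hu => (hd u hu.1).continuousAt.continuousWithinAt
  set S := Set.Icc a t ∩ h ⁻¹' Set.Iic 0 with hS
  have hSclosed : IsClosed S := hcont.preimage_isClosed_of_isClosed isClosed_Icc isClosed_Iic
  have hSne : S.Nonempty := ⟨a, ⟨le_refl a, hat⟩, ha⟩
  have hSbdd : BddAbove S := ⟨t, fun u hu => hu.1.2⟩
  set s := sSup S with hs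
  have hsS : s ∈ S := hSclosed.csSup_mem hSne hSbdd
  have has : a ≤ s := hsS.1.1
  have hs_le : s ≤ t := hsS.1.2
  have hst : s < t := by
    rcases lt_or_eq_of_le hs_le with h' | h'
    · exact h'
    · exfalso; have := hsS.2; rw [h'] at this; exact absurd this (not_le.2 hpos)
  have hgt : ∀ u, s < u → u ≤ t → 0 < h u := by
    intro u hsu hut
    by_contra hle
    push_neg at hle
    exact absurd (le_csSup hSbdd ⟨⟨has.trans hsu.le, hut⟩, hle⟩) (not_le.2 hsu)
  have hanti : AntitoneOn h (Set.Icc s t) := by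
    apply antitoneOn_of_deriv_nonpos (convex_Icc s t)
    · exact fun u hu => (hd u (has.trans hu.1)).continuousAt.continuousWithinAt
    · intro u hu
      rw [interior_Icc] at hu
      exact (hd u (has.trans hu.1.le)).differentiableWithinAt
    · intro u hu
      rw [interior_Icc] at hu
      exact (hneg u (has.trans hu.1.le) (hgt u hu.1 hu.2.le).le).le
  have := hanti (Set.left_mem_Icc.2 hs_le) (Set.right_mem_Icc.2 hs_le) hs_le
  have h2 : h s ≤ 0 := hsS.2
  linarith

private lemma conv_bound {b l C r q t : ℝ} (hb : 0 < b) (hq : q = 1 / b) (hC : 0 < C)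
    (ht : 1 ≤ t) (hF : Real.exp (b * l) ≤ C * t ^ r) :
    C ^ (-q) * t ^ (-(q * r)) ≤ Real.exp (-l) := by
  have ht0 : (0:ℝ) < t := lt_of_lt_of_le one_pos ht
  have hlog : b * l ≤ Real.log C + r * Real.log t := by
    have h1 := Real.log_le_log (Real.exp_pos _) hF
    rwa [Real.log_exp, Real.log_mul (ne_of_gt hC) (by positivity), Real.log_rpow ht0] at h1
  have hqb : q * b = 1 := by rw [hq]; field_simp
  have hq0 : 0 < q := by rw [hq]; positivity
  rw [Real.rpow_def_of_pos hC, Real.rpow_def_of_pos ht0, ← Real.exp_add]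
  apply Real.exp_le_exp.2
  have h2 : q * (b * l) ≤ q * (Real.log C + r * Real.log t) :=
    mul_le_mul_of_nonneg_left hlog hq0.le
  have h3 : q * (b * l) = l := by rw [← mul_assoc, hqb, one_mul]
  linarith [h2]

set_option maxHeartbeats 2000000 in
/-- No two-soliton separation with repulsive interaction at rate slower than allowed:
there is no pair `(L, v)` of C¹ functions on `[t₀, ∞)` with `L(t) → ∞`, `v(t) → 0`,
`|L' - v| ≤ e^{-(1/2+β)L}` and `v(t) ≤ -c₀ ∫ₜ^∞ e^{-L(s)} ds` for all large `t`. -/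
theorem no_repulsive_separation (β c₀ t₀ : ℝ) (hβ0 : 0 < β) (hβ : β < 1 / 2) (hc₀ : 0 < c₀)
    (L v : ℝ → ℝ)
    (hLdiff : ∀ t, t₀ ≤ t → DifferentiableAt ℝ L t)
    (hvdiff : ∀ t, t₀ ≤ t → DifferentiableAt ℝ v t)
    (hLlim : Tendsto L atTop atTop)
    (hvlim : Tendsto v atTop (nhds 0))
    (hint : IntegrableOn (fun s => Real.exp (-(L s))) (Set.Ici t₀))
    (hbounds : ∃ T : ℝ, t₀ ≤ T ∧ ∀ t, T ≤ t →
      |deriv L t - v t| ≤ Real.exp (-((1 / 2 + β) * L t)) ∧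
      v t ≤ -c₀ * ∫ s in Set.Ioi t, Real.exp (-(L s))) :
    False := by
  obtain ⟨Tb, hTb0, hTb⟩ := hbounds
  obtain ⟨b, hbdef⟩ : ∃ b : ℝ, b = 1 / 2 + β := ⟨_, rfl⟩
  rw [← hbdef] at hTb
  have hb : 0 < b := by rw [hbdef]; linarith
  have hb1 : b < 1 := by rw [hbdef]; linarith
  obtain ⟨q, hqdef⟩ : ∃ q : ℝ, q = 1 / b := ⟨_, rfl⟩
  have hq1 : 1 < q := by rw [hqdef, lt_div_iff₀ hb]; linarith
  have hq2 : q < 2 := by rw [hqdef, div_lt_iff₀ hb]; linarith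
  obtain ⟨F, hFfun⟩ : ∃ F : ℝ → ℝ, F = fun t => Real.exp (b * L t) := ⟨_, rfl⟩
  have hFpos : ∀ t, 0 < F t := by intro t; rw [hFfun]; exact Real.exp_pos _
  have hFd : ∀ t, t₀ ≤ t → HasDerivAt F (F t * (b * deriv L t)) t := by
    intro t ht
    rw [hFfun]
    exact ((hLdiff t ht).hasDerivAt.const_mul b).exp
  obtain ⟨T₀, hT₀def⟩ : ∃ T₀ : ℝ, T₀ = max t₀ Tb := ⟨_, rfl⟩
  obtain ⟨T₁, hT₁def⟩ : ∃ T₁ : ℝ, T₁ = max 1 T₀ := ⟨_, rfl⟩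
  have hT₁1 : (1:ℝ) ≤ T₁ := by rw [hT₁def]; exact le_max_left _ _
  have hT₀t₀ : t₀ ≤ T₀ := by rw [hT₀def]; exact le_max_left _ _
  have hT₀Tb : Tb ≤ T₀ := by rw [hT₀def]; exact le_max_right _ _
  have hT₁T₀ : T₀ ≤ T₁ := by rw [hT₁def]; exact le_max_right _ _
  have hInt : ∀ t, t₀ ≤ t → IntegrableOn (fun s => Real.exp (-(L s))) (Set.Ioi t) :=
    fun t ht => hint.mono_set (fun s hs => le_trans ht (le_of_lt hs))
  have hI0 : ∀ t : ℝ, 0 ≤ ∫ s in Set.Ioi t, Real.exp (-(L s)) :=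
    fun t => setIntegral_nonneg measurableSet_Ioi (fun s _ => (Real.exp_pos _).le)
  have hvneg : ∀ t, Tb ≤ t → v t ≤ 0 := by
    intro t ht
    have h1 := (hTb t ht).2
    nlinarith [hI0 t]
  have hL'le : ∀ t, Tb ≤ t → deriv L t ≤ v t + (F t)⁻¹ := by
    intro t ht
    have h2 := (abs_le.1 (hTb t ht).1).2
    have h3 : Real.exp (-(b * L t)) = (F t)⁻¹ := by rw [hFfun]; exact Real.exp_neg _
    linarith [h3 ▸ h2]
  -- base case: an eventual lower bound `c t^(-p)` with `p ≤ 1` contradicts integrability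
  have hbase : ∀ p c T : ℝ, 0 < c → T₁ ≤ T → p ≤ 1 →
      (∀ t, T ≤ t → c * t ^ (-p) ≤ Real.exp (-(L t))) → False := by
    intro p c T hc hT hp hcb
    have hT1 : (1:ℝ) ≤ T := le_trans hT₁1 hT
    have hT0 : (0:ℝ) < T := lt_of_lt_of_le one_pos hT1
    have h1 : IntegrableOn (fun s => Real.exp (-(L s))) (Set.Ioi T) :=
      hInt T (le_trans (hT₀t₀.trans hT₁T₀) hT)
    have h2 : IntegrableOn (fun s : ℝ => s ^ (-1 : ℝ)) (Set.Ioi T) := by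
      apply Integrable.mono' (h1.const_mul c⁻¹)
      · apply ContinuousOn.aestronglyMeasurable _ measurableSet_Ioi
        intro s hs
        exact (Real.continuousAt_rpow_const s (-1 : ℝ)
          (Or.inl (ne_of_gt (lt_trans hT0 hs)))).continuousWithinAt
      · filter_upwards [self_mem_ae_restrict measurableSet_Ioi] with s hs
        have hs1 : (1:ℝ) ≤ s := le_trans hT1 (le_of_lt hs)
        have hs0 : (0:ℝ) < s := lt_of_lt_of_le one_pos hs1
        rw [Real.norm_eq_abs, abs_of_nonneg (Real.rpow_nonneg hs0.le _)]
        have h3 : s ^ (-1:ℝ) ≤ s ^ (-p) := Real.rpow_le_rpow_of_exponent_le hs1 (by linarith)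
        have h4 := hcb s (le_of_lt hs)
        have h6 : c⁻¹ * (c * s ^ (-p)) ≤ c⁻¹ * Real.exp (-(L s)) :=
          mul_le_mul_of_nonneg_left h4 (inv_nonneg.2 hc.le)
        have h7 : c⁻¹ * (c * s ^ (-p)) = s ^ (-p) := by field_simp
        linarith
    have := (integrableOn_Ioi_rpow_iff hT0).1 h2
    linarith
  -- the iteration step
  have hstep : ∀ p c T : ℝ, 0 < c → T₁ ≤ T → 1 < p →
      (∀ t, T ≤ t → c * t ^ (-p) ≤ Real.exp (-(L t))) →
      ∃ c' T', 0 < c' ∧ T₁ ≤ T' ∧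
        ∀ t, T' ≤ t → c' * t ^ (-(q * (p - 1))) ≤ Real.exp (-(L t)) := by
    intro p c T hc hT hp hcb
    have hT1 : (1:ℝ) ≤ T := le_trans hT₁1 hT
    have hTt₀ : t₀ ≤ T := le_trans (hT₀t₀.trans hT₁T₀) hT
    have hTTb : Tb ≤ T := le_trans (hT₀Tb.trans hT₁T₀) hT
    obtain ⟨c₁, hc₁def⟩ : ∃ c₁ : ℝ, c₁ = c₀ * c / (p - 1) := ⟨_, rfl⟩
    have hc₁ : 0 < c₁ := by rw [hc₁def]; exact div_pos (mul_pos hc₀ hc) (by linarith)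
    have hp1 : p - 1 ≠ 0 := by intro h; nlinarith
    have hp1' : 1 - p ≠ 0 := by intro h; apply hp1; linarith
    -- (i) lower bound on the tail integral gives an upper bound on v
    have hvle : ∀ t, T ≤ t → v t ≤ -(c₁ * t ^ (1 - p)) := by
      intro t ht
      have ht0 : (0:ℝ) < t := lt_of_lt_of_le one_pos (hT1.trans ht)
      have hintc : IntegrableOn (fun s : ℝ => c * s ^ (-p)) (Set.Ioi t) :=
        (integrableOn_Ioi_rpow_of_lt (by linarith) ht0).const_mul c
      have hmono : ∫ s in Set.Ioi t, c * s ^ (-p) ≤ ∫ s in Set.Ioi t, Real.exp (-(L s)) := by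
        apply setIntegral_mono_on hintc (hInt t (hTt₀.trans ht)) measurableSet_Ioi
        intro s hs
        exact hcb s (le_of_lt (lt_of_le_of_lt ht hs))
      have hval : ∫ s in Set.Ioi t, c * s ^ (-p) = c₀⁻¹ * (c₁ * t ^ (1 - p)) := by
        rw [MeasureTheory.integral_const_mul, integral_Ioi_rpow_of_lt (by linarith) ht0]
        rw [show -p + 1 = 1 - p by ring, hc₁def]
        field_simp
        ring
      have h2 := (hTb t (hTTb.trans ht)).2
      have h3 : c₀ * (c₀⁻¹ * (c₁ * t ^ (1 - p))) ≤ c₀ * ∫ s in Set.Ioi t, Real.exp (-(L s)) :=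
        mul_le_mul_of_nonneg_left (hval ▸ hmono) hc₀.le
      have h4 : c₀ * (c₀⁻¹ * (c₁ * t ^ (1 - p))) = c₁ * t ^ (1 - p) := by
        field_simp
      linarith
    -- (ii) differential inequality for F
    have hF'le : ∀ t, T ≤ t → deriv F t ≤ b * (1 - c₁ * t ^ (1 - p) * F t) := by
      intro t ht
      have hd := hFd t (hTt₀.trans ht)
      rw [hd.deriv]
      have h1 := hL'le t (hTTb.trans ht)
      have h2 := hvle t ht
      have hFt := hFpos t
      have h3 : deriv L t * F t ≤ (v t + (F t)⁻¹) * F t :=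
        mul_le_mul_of_nonneg_right h1 hFt.le
      have h4 : (F t)⁻¹ * F t = 1 := inv_mul_cancel₀ (ne_of_gt hFt)
      have h5 : v t * F t ≤ -(c₁ * t ^ (1 - p)) * F t := mul_le_mul_of_nonneg_right h2 hFt.le
      have h6 : deriv L t * F t ≤ 1 - c₁ * t ^ (1 - p) * F t := by nlinarith [h3, h4, h5]
      have h7 := mul_le_mul_of_nonneg_left h6 hb.le
      nlinarith [h7]
    -- wherever F is above the barrier, F decreases fast
    have hkey2 : ∀ u, T ≤ u → 2 / c₁ * u ^ (p - 1) ≤ F u → deriv F u ≤ -b := by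
      intro u hu hub
      have hu0 : (0:ℝ) < u := lt_of_lt_of_le one_pos (hT1.trans hu)
      have h2 : u ^ (1 - p) * u ^ (p - 1) = 1 := by
        rw [← Real.rpow_add hu0]
        norm_num
      have e1 : c₁ * u ^ (1 - p) * (2 / c₁ * u ^ (p - 1)) = 2 := by
        field_simp
        linear_combination h2
      have hx : (0:ℝ) < u ^ (1 - p) := Real.rpow_pos_of_pos hu0 _
      have h3 : 2 ≤ c₁ * u ^ (1 - p) * F u := by
        have h5 := mul_le_mul_of_nonneg_left hub (mul_pos hc₁ hx).le
        nlinarith [h5, e1]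
      have h4 := hF'le u hu
      nlinarith [h4, mul_nonneg hb.le (by linarith : (0:ℝ) ≤ c₁ * u ^ (1 - p) * F u - 2)]
    -- (iii) F must eventually dip below the barrier
    have hcross : ∃ T', T ≤ T' ∧ F T' ≤ 2 / c₁ * T' ^ (p - 1) := by
      by_contra hcon
      push_neg at hcon
      have hFd' : ∀ u ∈ Set.Icc T (T + (F T + 1) / b), deriv F u ≤ -b :=
        fun u hu => hkey2 u hu.1 (hcon u hu.1).le
      have ht₂ : T ≤ T + (F T + 1) / b := by
        have h0 : 0 ≤ (F T + 1) / b := div_nonneg (by linarith [hFpos T]) hb.le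
        linarith
      have hslope := slope_le ht₂
        (fun u hu => (hFd u (hTt₀.trans hu.1)).differentiableAt) hFd'
      have hbne : b ≠ 0 := ne_of_gt hb
      have hcalc : -b * (T + (F T + 1) / b - T) = -(F T + 1) := by
        field_simp
        ring
      linarith [hFpos (T + (F T + 1) / b), hslope, hcalc]
    obtain ⟨T', hTT', hT'bar⟩ := hcross
    have hT'1 : (1:ℝ) ≤ T' := hT1.trans hTT'
    -- (iv) once below the barrier, F stays below
    have hbar : ∀ t, T' ≤ t → F t - 2 / c₁ * t ^ (p - 1) ≤ 0 := by
      apply stay_below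
      · intro u hu
        have hu0 : (0:ℝ) < u := lt_of_lt_of_le one_pos (hT'1.trans hu)
        exact ((hFd u (hTt₀.trans (hTT'.trans hu))).differentiableAt).sub
          (((Real.hasDerivAt_rpow_const (Or.inl hu0.ne')).differentiableAt).const_mul _)
      · intro u hu hpos
        have hu0 : (0:ℝ) < u := lt_of_lt_of_le one_pos (hT'1.trans hu)
        have hB : HasDerivAt (fun t : ℝ => 2 / c₁ * t ^ (p - 1))
            (2 / c₁ * ((p - 1) * u ^ (p - 1 - 1))) u :=
          (Real.hasDerivAt_rpow_const (Or.inl hu0.ne')).const_mul _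
        have hdF := hFd u (hTt₀.trans (hTT'.trans hu))
        rw [deriv_fun_sub hdF.differentiableAt hB.differentiableAt, hB.deriv]
        have h5 := hkey2 u (hTT'.trans hu) (by linarith)
        have h6 : 0 < 2 / c₁ * ((p - 1) * u ^ (p - 1 - 1)) := by
          have h8 := Real.rpow_pos_of_pos hu0 (p - 1 - 1)
          have h7 : 0 < 2 / c₁ := by positivity
          exact mul_pos h7 (mul_pos (by linarith) h8)
        linarith
      · linarith [hT'bar]
    -- (v) convert the barrier into a new lower bound for exp(-L)
    refine ⟨(2 / c₁) ^ (-q), T', Real.rpow_pos_of_pos (by positivity) _, hT.trans hTT', ?_⟩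
    intro t ht
    have hFt : F t = Real.exp (b * L t) := by rw [hFfun]
    exact conv_bound hb hqdef (by positivity) (hT'1.trans ht)
      (by rw [← hFt]; linarith [hbar t ht])
  -- iterate the step
  obtain ⟨δ, hδdef⟩ : ∃ δ : ℝ, δ = q * (2 - q) := ⟨_, rfl⟩
  have hδ : 0 < δ := by rw [hδdef]; nlinarith
  have hδeq : δ = 2 * q - q * q := by rw [hδdef]; ring
  have key : ∀ n : ℕ, ∀ p c T : ℝ, 0 < c → T₁ ≤ T → p ≤ q → p ≤ 1 + n * δ →
      (∀ t, T ≤ t → c * t ^ (-p) ≤ Real.exp (-(L t))) → False := by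
    intro n
    induction n with
    | zero =>
      intro p c T hc hT hpq hp1 hcb
      exact hbase p c T hc hT (by simpa using hp1) hcb
    | succ n ih =>
      intro p c T hc hT hpq hp1 hcb
      by_cases hple : p ≤ 1
      · exact hbase p c T hc hT hple hcb
      · push_neg at hple
        obtain ⟨c', T', hc', hT', hcb'⟩ := hstep p c T hc hT hple hcb
        push_cast at hp1
        apply ih (q * (p - 1)) c' T' hc' hT'
        · have h1 := mul_le_mul_of_nonneg_left (show p - 1 ≤ 1 by linarith)
            (show (0:ℝ) ≤ q by linarith)
          linarith
        · have h1 : (0:ℝ) ≤ (q - 1) * (q - p) :=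
            mul_nonneg (by linarith) (by linarith)
          nlinarith [hp1, hδeq, h1]
        · exact hcb'
  -- initial linear bound on F
  have hFinit : ∀ t, T₁ ≤ t → F t ≤ (F T₀ + b * |T₀| + b) * t := by
    intro t ht
    have hder : ∀ u ∈ Set.Icc T₀ t, deriv F u ≤ b := by
      intro u hu
      have hd := hFd u (hT₀t₀.trans hu.1)
      rw [hd.deriv]
      have h1 := hL'le u (hT₀Tb.trans hu.1)
      have h2 := hvneg u (hT₀Tb.trans hu.1)
      have hFu := hFpos u
      have h4 : (F u)⁻¹ * F u = 1 := inv_mul_cancel₀ (ne_of_gt hFu)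
      have h3 : deriv L u * F u ≤ (v u + (F u)⁻¹) * F u := mul_le_mul_of_nonneg_right h1 hFu.le
      have h5 : v u * F u ≤ 0 := mul_nonpos_of_nonpos_of_nonneg h2 hFu.le
      have h6 : deriv L u * F u ≤ 1 := by nlinarith [h3, h4, h5]
      have h7 := mul_le_mul_of_nonneg_left h6 hb.le
      nlinarith [h7]
    have hslope := slope_le (hT₁T₀.trans ht)
      (fun u hu => (hFd u (hT₀t₀.trans hu.1)).differentiableAt) hder
    have ht1 : (1:ℝ) ≤ t := hT₁1.trans ht
    have habs := mul_le_mul_of_nonneg_left (neg_le_abs T₀) hb.le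
    have hF0 : 0 < F T₀ := hFpos T₀
    have hb0 : 0 ≤ b * |T₀| := mul_nonneg hb.le (abs_nonneg _)
    have hmul := mul_le_mul_of_nonneg_left ht1 (by linarith : (0:ℝ) ≤ F T₀ + b * |T₀|)
    nlinarith [hslope, habs, hmul]
  obtain ⟨C₂, hC₂def⟩ : ∃ C₂ : ℝ, C₂ = F T₀ + b * |T₀| + b := ⟨_, rfl⟩
  have hC₂ : 0 < C₂ := by
    have h9 := hFpos T₀
    have h0 : 0 ≤ b * |T₀| := mul_nonneg hb.le (abs_nonneg _)
    rw [hC₂def]; linarith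
  have hinit : ∀ t, T₁ ≤ t → C₂ ^ (-q) * t ^ (-q) ≤ Real.exp (-(L t)) := by
    intro t ht
    have hFt : F t = Real.exp (b * L t) := by rw [hFfun]
    have h1 : Real.exp (b * L t) ≤ C₂ * t ^ (1:ℝ) := by
      rw [← hFt, Real.rpow_one, hC₂def]
      exact hFinit t ht
    have h2 := conv_bound hb hqdef hC₂ (hT₁1.trans ht) h1
    simpa using h2
  obtain ⟨N, hN⟩ := exists_nat_ge ((q - 1) / δ)
  have hNq : q ≤ 1 + N * δ := by
    rw [div_le_iff₀ hδ] at hN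
    linarith
  exact key N q (C₂ ^ (-q)) T₁ (Real.rpow_pos_of_pos hC₂ _) le_rfl le_rfl hNq hinit
end
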